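/- arXiv:2501.12896 — 7 statements merged into one kernel-verified Lean document; each statement's English description precedes it below -/
import Mathlib

section
/- Let π̄ be an irrational real number. Then the image of the map θ ↦ exp(iθ) + exp(i·π̄·θ) (for θ ranging over ℝ) is dense in the closed disk {z ∈ ℂ : |z| ≤ 2}. In particular, for every complex number z with |z| ≤ 2 and every ε > 0 there exists θ ∈ ℝ with |z − (exp(iθ) + exp(i·π̄·θ))| < ε. -/
open Complex

/-- The subgroup `ℤ(2π·π̄) + ℤ(2π)` is dense in `ℝ` when `π̄` is irrational. -/
lemma dense_subgroup_of_irrational (pibar : ℝ) (h : Irrational pibar) :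
    Dense ((AddSubgroup.zmultiples (2 * Real.pi * pibar) ⊔
      AddSubgroup.zmultiples (2 * Real.pi) : AddSubgroup ℝ) : Set ℝ) := by
  rcases AddSubgroup.dense_or_cyclic (AddSubgroup.zmultiples (2 * Real.pi * pibar) ⊔
      AddSubgroup.zmultiples (2 * Real.pi)) with hd | ⟨a, ha⟩
  · exact hd
  · exfalso
    have h1 : (2 * Real.pi * pibar) ∈ AddSubgroup.closure ({a} : Set ℝ) := by
      rw [← ha]; exact AddSubgroup.mem_sup_left (AddSubgroup.mem_zmultiples _)
    have h2 : (2 * Real.pi) ∈ AddSubgroup.closure ({a} : Set ℝ) := by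
      rw [← ha]; exact AddSubgroup.mem_sup_right (AddSubgroup.mem_zmultiples _)
    rw [AddSubgroup.mem_closure_singleton] at h1 h2
    obtain ⟨k, hk⟩ := h1
    obtain ⟨m, hm⟩ := h2
    have hpi : (2 : ℝ) * Real.pi ≠ 0 := by positivity
    have hm0 : (m : ℝ) ≠ 0 := by
      rintro h0
      rw [zsmul_eq_mul, h0, zero_mul] at hm
      exact hpi hm.symm
    have ha0 : a ≠ 0 := by
      rintro rfl; rw [smul_zero] at hm; exact hpi hm.symm
    apply h
    refine ⟨(k : ℚ) / (m : ℚ), ?_⟩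
    have : pibar * (m * a) = k * a := by
      try simp only [zsmul_eq_mul] at hk hm
      linear_combination pibar * hm - hk
    have hpm : pibar * m = k := by
      try simp only [zsmul_eq_mul] at hk hm
      have := mul_right_cancel₀ ha0 (by linarith [this] : pibar * (m:ℝ) * a = (k:ℝ) * a)
      exact this
    have : ((((k:ℚ)/(m:ℚ)):ℚ):ℝ) = (k:ℝ)/(m:ℝ) := by push_cast; ring
    rw [this, div_eq_iff hm0]
    exact hpm.symm

theorem pi_quant_dense_image (pibar : ℝ) (h : Irrational pibar) :
    Metric.closedBall (0 : ℂ) 2 ⊆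
      closure (Set.range fun θ : ℝ =>
        Complex.exp (θ * Complex.I) + Complex.exp (pibar * θ * Complex.I)) := by
  intro z hz
  rw [Metric.mem_closedBall, dist_zero_right] at hz
  -- Step 1: write z = exp(αI) + exp(βI)
  set r : ℝ := ‖z‖ with hr
  have hr0 : 0 ≤ r := norm_nonneg z
  have hr2 : r ≤ 2 := by simpa using hz
  set δ : ℝ := Real.arccos (r / 2) with hδ
  set φ : ℝ := z.arg with hφ
  have hcos : Real.cos δ = r / 2 :=
    Real.cos_arccos (by linarith) (by linarith)
  set α : ℝ := φ + δ with hα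
  set β : ℝ := φ - δ with hβ
  have key : Complex.exp (α * Complex.I) + Complex.exp (β * Complex.I) = z := by
    have h1 : (α : ℂ) * Complex.I = φ * Complex.I + δ * Complex.I := by
      push_cast [hα]; ring
    have h2 : (β : ℂ) * Complex.I = φ * Complex.I + (-δ) * Complex.I := by
      push_cast [hβ]; ring
    rw [h1, h2, Complex.exp_add, Complex.exp_add, ← mul_add]
    have hc : Complex.exp ((δ : ℂ) * Complex.I) + Complex.exp ((-δ : ℂ) * Complex.I)
        = 2 * Complex.cos (δ : ℂ) := by
      rw [Complex.cos]
      push_cast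
      ring_nf
    rw [hc, ← Complex.ofReal_cos, hcos]
    have := Complex.norm_mul_exp_arg_mul_I z
    push_cast
    rw [← hφ, ← hr] at *
    rw [mul_comm]
    calc (2 * (↑r / 2)) * Complex.exp (↑φ * Complex.I)
        = (r : ℂ) * Complex.exp (↑φ * Complex.I) := by ring_nf
      _ = z := this
  -- Step 2: density argument
  set S : AddSubgroup ℝ := AddSubgroup.zmultiples (2 * Real.pi * pibar) ⊔
      AddSubgroup.zmultiples (2 * Real.pi) with hS
  have hdense : Dense (S : Set ℝ) := dense_subgroup_of_irrational pibar h
  set g : ℝ → ℂ := fun s => Complex.exp (α * Complex.I) +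
      Complex.exp ((pibar * α + s : ℝ) * Complex.I) with hg
  have hgcont : Continuous g := by
    apply Continuous.add continuous_const
    apply Complex.continuous_exp.comp
    continuity
  set t : ℝ := β - pibar * α with ht
  have hzgt : z = g t := by
    rw [hg]
    simp only
    rw [show pibar * α + t = β by rw [ht]; ring]
    exact key.symm
  have hsub : g '' (S : Set ℝ) ⊆ Set.range fun θ : ℝ =>
      Complex.exp (θ * Complex.I) + Complex.exp (pibar * θ * Complex.I) := by
    rintro w ⟨s, hs, rfl⟩
    rw [SetLike.mem_coe, AddSubgroup.mem_sup] at hs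
    obtain ⟨x, hx, y, hy, hxy⟩ := hs
    obtain ⟨j, hj⟩ := AddSubgroup.mem_zmultiples_iff.mp hx
    obtain ⟨l, hl⟩ := AddSubgroup.mem_zmultiples_iff.mp hy
    refine ⟨α + 2 * Real.pi * j, ?_⟩
    simp only [hg]
    congr 1
    · -- exp((α + 2πj)I) = exp(αI)
      have h1 : ((α + 2 * Real.pi * j : ℝ) : ℂ) * Complex.I
          = α * Complex.I + (j : ℂ) * (2 * (Real.pi : ℂ) * Complex.I) := by
        push_cast; ring
      rw [h1, Complex.exp_add, Complex.exp_int_mul_two_pi_mul_I, mul_one]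
    · -- exp(pibar(α+2πj)I) = exp((pibar α + s)I)
      have hsval : s = j * (2 * Real.pi * pibar) + l * (2 * Real.pi) := by
        rw [← hxy, ← hj, ← hl]; push_cast [zsmul_eq_mul]; ring
      have h2 : (pibar : ℂ) * ((α + 2 * Real.pi * j : ℝ) : ℂ) * Complex.I
          = ((pibar * α + s : ℝ) : ℂ) * Complex.I + ((-l : ℤ) : ℂ) * (2 * (Real.pi : ℂ) * Complex.I) := by
        push_cast [hsval]; ring
      rw [h2, Complex.exp_add, Complex.exp_int_mul_two_pi_mul_I, mul_one]
  have ht' : t ∈ closure (S : Set ℝ) := hdense t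
  have : g t ∈ closure (g '' (S : Set ℝ)) :=
    image_closure_subset_closure_image hgcont ⟨t, ht', rfl⟩
  rw [hzgt]
  exact closure_mono hsub this
end

section
/- Let π̄, T be real numbers with π̄ ≠ 1. Suppose that for all θ ∈ ℝ both cos θ + cos(π̄·θ) = cos(θ + T) + cos(π̄·(θ + T)) and sin θ + sin(π̄·θ) = sin(θ + T) + sin(π̄·(θ + T)). Then for all θ ∈ ℝ one has sin(π̄·θ) = sin(π̄·(θ + T)), cos(π̄·θ) = cos(π̄·(θ + T)), sin θ = sin(θ + T), and cos θ = cos(θ + T). -/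
theorem pi_quant_period_split (pibar T : ℝ) (hpi : pibar ≠ 1)
    (h : ∀ θ : ℝ,
      Real.cos θ + Real.cos (pibar * θ) =
        Real.cos (θ + T) + Real.cos (pibar * (θ + T)) ∧
      Real.sin θ + Real.sin (pibar * θ) =
        Real.sin (θ + T) + Real.sin (pibar * (θ + T))) :
    ∀ θ : ℝ,
      Real.sin (pibar * θ) = Real.sin (pibar * (θ + T)) ∧
      Real.cos (pibar * θ) = Real.cos (pibar * (θ + T)) ∧
      Real.sin θ = Real.sin (θ + T) ∧
      Real.cos θ = Real.cos (θ + T) := by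
  have hc : (fun θ : ℝ => Real.cos θ + Real.cos (pibar * θ)) =
      fun θ : ℝ => Real.cos (θ + T) + Real.cos (pibar * (θ + T)) :=
    funext fun θ => (h θ).1
  have hs : (fun θ : ℝ => Real.sin θ + Real.sin (pibar * θ)) =
      fun θ : ℝ => Real.sin (θ + T) + Real.sin (pibar * (θ + T)) :=
    funext fun θ => (h θ).2
  intro θ
  -- derivatives of the four functions
  have d1 : HasDerivAt (fun θ : ℝ => Real.cos θ + Real.cos (pibar * θ))
      (-Real.sin θ * 1 + -Real.sin (pibar * θ) * (pibar * 1)) θ :=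
    ((hasDerivAt_id θ).cos).add (((hasDerivAt_id θ).const_mul pibar).cos)
  have d2 : HasDerivAt (fun θ : ℝ => Real.cos (θ + T) + Real.cos (pibar * (θ + T)))
      (-Real.sin (θ + T) * 1 + -Real.sin (pibar * (θ + T)) * (pibar * 1)) θ :=
    (((hasDerivAt_id θ).add_const T).cos).add
      ((((hasDerivAt_id θ).add_const T).const_mul pibar).cos)
  have d3 : HasDerivAt (fun θ : ℝ => Real.sin θ + Real.sin (pibar * θ))
      (Real.cos θ * 1 + Real.cos (pibar * θ) * (pibar * 1)) θ :=
    ((hasDerivAt_id θ).sin).add (((hasDerivAt_id θ).const_mul pibar).sin)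
  have d4 : HasDerivAt (fun θ : ℝ => Real.sin (θ + T) + Real.sin (pibar * (θ + T)))
      (Real.cos (θ + T) * 1 + Real.cos (pibar * (θ + T)) * (pibar * 1)) θ :=
    (((hasDerivAt_id θ).add_const T).sin).add
      ((((hasDerivAt_id θ).add_const T).const_mul pibar).sin)
  have e1 : -Real.sin θ * 1 + -Real.sin (pibar * θ) * (pibar * 1) =
      -Real.sin (θ + T) * 1 + -Real.sin (pibar * (θ + T)) * (pibar * 1) := by
    have := d1.deriv
    rw [hc, d2.deriv] at this
    linarith [this]
  have e2 : Real.cos θ * 1 + Real.cos (pibar * θ) * (pibar * 1) =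
      Real.cos (θ + T) * 1 + Real.cos (pibar * (θ + T)) * (pibar * 1) := by
    have := d3.deriv
    rw [hs, d4.deriv] at this
    linarith [this]
  have h1 := (h θ).1
  have h2 := (h θ).2
  have hne : pibar - 1 ≠ 0 := sub_ne_zero.mpr hpi
  have bsin : Real.sin (pibar * θ) = Real.sin (pibar * (θ + T)) := by
    have : (pibar - 1) * (Real.sin (pibar * θ) - Real.sin (pibar * (θ + T))) = 0 := by
      ring_nf
      ring_nf at e1 h2
      linarith
    have := mul_eq_zero.mp this
    rcases this with h' | h'
    · exact absurd h' hne
    · linarith [sub_eq_zero.mp h']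
  have bcos : Real.cos (pibar * θ) = Real.cos (pibar * (θ + T)) := by
    have : (pibar - 1) * (Real.cos (pibar * θ) - Real.cos (pibar * (θ + T))) = 0 := by
      ring_nf
      ring_nf at e2 h1
      linarith
    rcases mul_eq_zero.mp this with h' | h'
    · exact absurd h' hne
    · linarith [sub_eq_zero.mp h']
  refine ⟨bsin, bcos, by linarith, by linarith⟩
end

section
/- Let π̄, x, y ∈ ℝ with x > 0 and 0 < x² + y² ≤ 4. Define α = arctan(y/x) and β = arccos(√(x² + y²)/2). If θ ∈ ℝ and m, k ∈ ℤ satisfy θ = α − β + 2πm and π̄·θ = α + β + 2πk, then cos θ + cos(π̄·θ) = x and sin θ + sin(π̄·θ) = y; equivalently, x + iy = exp(iθ) + exp(i·π̄·θ). -/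
theorem pi_quant_geometric_forward (pibar x y : ℝ) (hx : 0 < x)
    (hpos : 0 < x ^ 2 + y ^ 2) (hle : x ^ 2 + y ^ 2 ≤ 4)
    (α β θ : ℝ) (hα : α = Real.arctan (y / x))
    (hβ : β = Real.arccos (Real.sqrt (x ^ 2 + y ^ 2) / 2))
    (m k : ℤ)
    (hθ : θ = α - β + 2 * Real.pi * m)
    (hpθ : pibar * θ = α + β + 2 * Real.pi * k) :
    Real.cos θ + Real.cos (pibar * θ) = x ∧
    Real.sin θ + Real.sin (pibar * θ) = y := by
  have hr : (0:ℝ) < Real.sqrt (x ^ 2 + y ^ 2) := Real.sqrt_pos.2 hpos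
  have hr2 : Real.sqrt (x ^ 2 + y ^ 2) ^ 2 = x ^ 2 + y ^ 2 := Real.sq_sqrt hpos.le
  have hrle : Real.sqrt (x ^ 2 + y ^ 2) ≤ 2 := by
    rw [show (2:ℝ) = Real.sqrt 4 by rw [show (4:ℝ) = 2^2 by norm_num, Real.sqrt_sq]; norm_num]
    exact Real.sqrt_le_sqrt hle
  have hcosβ : Real.cos β = Real.sqrt (x ^ 2 + y ^ 2) / 2 := by
    rw [hβ, Real.cos_arccos] <;> nlinarith
  have hcosα : Real.cos α = x / Real.sqrt (x ^ 2 + y ^ 2) := by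
    rw [hα, Real.cos_arctan]
    have : Real.sqrt (1 + (y / x) ^ 2) = Real.sqrt (x ^ 2 + y ^ 2) / x := by
      rw [eq_div_iff hx.ne', ← Real.sqrt_sq hx.le, ← Real.sqrt_mul (by positivity)]
      congr 1
      field_simp
      rw [Real.sq_sqrt (sq_nonneg x)]
    rw [this]
    field_simp
  have hsinα : Real.sin α = y / Real.sqrt (x ^ 2 + y ^ 2) := by
    rw [hα, Real.sin_arctan]
    have : Real.sqrt (1 + (y / x) ^ 2) = Real.sqrt (x ^ 2 + y ^ 2) / x := by
      rw [eq_div_iff hx.ne', ← Real.sqrt_sq hx.le, ← Real.sqrt_mul (by positivity)]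
      congr 1
      field_simp
      rw [Real.sq_sqrt (sq_nonneg x)]
    rw [this]
    field_simp
  have h1 : Real.cos θ = Real.cos (α - β) := by
    rw [hθ, show α - β + 2 * Real.pi * m = (α - β) + m * (2 * Real.pi) by ring,
      Real.cos_add_int_mul_two_pi]
  have h2 : Real.cos (pibar * θ) = Real.cos (α + β) := by
    rw [hpθ, show α + β + 2 * Real.pi * k = (α + β) + k * (2 * Real.pi) by ring,
      Real.cos_add_int_mul_two_pi]
  have h3 : Real.sin θ = Real.sin (α - β) := by
    rw [hθ, show α - β + 2 * Real.pi * m = (α - β) + m * (2 * Real.pi) by ring,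
      Real.sin_add_int_mul_two_pi]
  have h4 : Real.sin (pibar * θ) = Real.sin (α + β) := by
    rw [hpθ, show α + β + 2 * Real.pi * k = (α + β) + k * (2 * Real.pi) by ring,
      Real.sin_add_int_mul_two_pi]
  rw [h1, h2, h3, h4, Real.cos_sub, Real.cos_add, Real.sin_sub, Real.sin_add,
    hcosα, hsinα, hcosβ]
  constructor <;> field_simp <;> ring
end

section
/- Let π̄, x, y ∈ ℝ with x > 0 and 0 < x² + y² < 4. Define α = arctan(y/x) and β = arccos(√(x² + y²)/2). If θ ∈ ℝ satisfies cos θ + cos(π̄·θ) = x and sin θ + sin(π̄·θ) = y, then there exist integers m, k ∈ ℤ such that either (θ = α − β + 2πm and π̄·θ = α + β + 2πk) or (θ = α + β + 2πm and π̄·θ = α − β + 2πk). -/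
open Real

set_option maxHeartbeats 1600000

theorem pi_quant_geometric_converse (pibar x y : ℝ) (hx : 0 < x)
    (hpos : 0 < x ^ 2 + y ^ 2) (hlt : x ^ 2 + y ^ 2 < 4)
    (α β θ : ℝ) (hα : α = Real.arctan (y / x))
    (hβ : β = Real.arccos (Real.sqrt (x ^ 2 + y ^ 2) / 2))
    (hcos : Real.cos θ + Real.cos (pibar * θ) = x)
    (hsin : Real.sin θ + Real.sin (pibar * θ) = y) :
    ∃ m k : ℤ,
      (θ = α - β + 2 * Real.pi * m ∧ pibar * θ = α + β + 2 * Real.pi * k) ∨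
      (θ = α + β + 2 * Real.pi * m ∧ pibar * θ = α - β + 2 * Real.pi * k) := by
  obtain ⟨φ, hφ⟩ : ∃ t, pibar * θ = t := ⟨_, rfl⟩
  rw [hφ] at hcos hsin ⊢
  obtain ⟨s, hs⟩ : ∃ s, (θ + φ) / 2 = s := ⟨_, rfl⟩
  obtain ⟨d, hd⟩ : ∃ d, (θ - φ) / 2 = d := ⟨_, rfl⟩
  obtain ⟨r, hrdef⟩ : ∃ r, Real.sqrt (x ^ 2 + y ^ 2) = r := ⟨_, rfl⟩
  rw [hrdef] at hβ
  have hθsd : θ = s + d := by rw [← hs, ← hd]; ring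
  have hφsd : φ = s - d := by rw [← hs, ← hd]; ring
  have hr2 : r ^ 2 = x ^ 2 + y ^ 2 := by rw [← hrdef]; exact Real.sq_sqrt hpos.le
  have hrpos : 0 < r := by rw [← hrdef]; exact Real.sqrt_pos.mpr hpos
  have hrlt : r < 2 := by nlinarith
  have hx2 : x = 2 * cos s * cos d := by
    rw [← hcos, hθsd, hφsd, Real.cos_add, Real.cos_sub]; ring
  have hy2 : y = 2 * sin s * cos d := by
    rw [← hsin, hθsd, hφsd, Real.sin_add, Real.sin_sub]; ring
  have hpyth : sin s ^ 2 + cos s ^ 2 = 1 := Real.sin_sq_add_cos_sq s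
  have hrd : r ^ 2 = 4 * cos d ^ 2 := by
    rw [hr2]
    linear_combination (x + 2 * cos s * cos d) * hx2 +
      (y + 2 * sin s * cos d) * hy2 + 4 * cos d ^ 2 * hpyth
  have hcosβ : cos β = r / 2 := by
    rw [hβ, Real.cos_arccos (by linarith) (by linarith)]
  have hsqx : 1 + (y / x) ^ 2 = (r / x) ^ 2 := by
    field_simp
    linarith [hr2]
  have hsq : Real.sqrt (1 + (y / x) ^ 2) = r / x := by
    rw [hsqx, Real.sqrt_sq (div_pos hrpos hx).le]
  have hcosα : cos α = x / r := by
    rw [hα, Real.cos_arctan, hsq]; field_simp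
  have hsinα : sin α = y / r := by
    rw [hα, Real.sin_arctan, hsq]; field_simp
  have hfac : (r + 2 * cos d) * (r - 2 * cos d) = 0 := by linear_combination hrd
  have hcd : cos d ≠ 0 := by
    intro h; rw [h] at hrd; nlinarith
  rcases hcd.lt_or_gt with hneg | hposd
  · -- cos d < 0 : r = -2 cos d
    have hrc : r = -(2 * cos d) := by
      rcases mul_eq_zero.mp hfac with h | h
      · linarith
      · nlinarith
    have h1 : cos s = cos (α + Real.pi) := by
      rw [Real.cos_add_pi, hcosα, hx2, hrc]
      field_simp
    have h2 : sin s = sin (α + Real.pi) := by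
      rw [Real.sin_add_pi, hsinα, hy2, hrc]
      field_simp
    obtain ⟨n, hn⟩ := Real.Angle.angle_eq_iff_two_pi_dvd_sub.mp
      (Real.Angle.cos_sin_inj h1 h2)
    have hcdβ : cos d = cos (Real.pi - β) := by
      rw [Real.cos_pi_sub, hcosβ]; linarith
    obtain ⟨k, hk | hk⟩ := Real.cos_eq_cos_iff.mp hcdβ
    · refine ⟨n - k + 1, n + k, Or.inl ⟨?_, ?_⟩⟩
      · rw [hθsd]; push_cast; linear_combination hn - hk
      · rw [hφsd]; push_cast; linear_combination hn + hk
    · refine ⟨n + k, n - k + 1, Or.inr ⟨?_, ?_⟩⟩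
      · rw [hθsd]; push_cast; linear_combination hn + hk
      · rw [hφsd]; push_cast; linear_combination hn - hk
  · -- cos d > 0 : r = 2 cos d
    have hrc : r = 2 * cos d := by
      rcases mul_eq_zero.mp hfac with h | h
      · nlinarith
      · linarith
    have h1 : cos s = cos α := by
      rw [hcosα, hx2, hrc]; field_simp
    have h2 : sin s = sin α := by
      rw [hsinα, hy2, hrc]; field_simp
    obtain ⟨n, hn⟩ := Real.Angle.angle_eq_iff_two_pi_dvd_sub.mp
      (Real.Angle.cos_sin_inj h1 h2)
    have hcdβ : cos d = cos β := by rw [hcosβ]; linarith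
    obtain ⟨k, hk | hk⟩ := Real.cos_eq_cos_iff.mp hcdβ
    · refine ⟨n - k, n + k, Or.inr ⟨?_, ?_⟩⟩
      · rw [hθsd]; push_cast; linear_combination hn - hk
      · rw [hφsd]; push_cast; linear_combination hn + hk
    · refine ⟨n + k, n - k, Or.inl ⟨?_, ?_⟩⟩
      · rw [hθsd]; push_cast; linear_combination hn + hk
      · rw [hφsd]; push_cast; linear_combination hn - hk
end

section
/- Let π̄ ∈ ℝ with 0 ≤ π̄ ≤ 1, let θ ∈ ℝ, and let Δθ ≥ 0. Suppose that for all t ∈ [θ, θ + Δθ] one has |sin t + sin(π̄·t)| ≤ 1. Then |(cos(θ + Δθ) + cos(π̄·(θ + Δθ))) − (cos θ + cos(π̄·θ))| ≤ Δθ. -/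
theorem pi_quant_error_real (pibar : ℝ) (h0 : 0 ≤ pibar) (h1 : pibar ≤ 1)
    (θ Δθ : ℝ) (hΔ : 0 ≤ Δθ)
    (hy : ∀ t ∈ Set.Icc θ (θ + Δθ), |Real.sin t + Real.sin (pibar * t)| ≤ 1) :
    |(Real.cos (θ + Δθ) + Real.cos (pibar * (θ + Δθ))) -
      (Real.cos θ + Real.cos (pibar * θ))| ≤ Δθ := by
  set f : ℝ → ℝ := fun t => Real.cos t + Real.cos (pibar * t) with hf
  have hderiv : ∀ t ∈ Set.Icc θ (θ + Δθ),
      HasDerivWithinAt f (-(Real.sin t + pibar * Real.sin (pibar * t)))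
        (Set.Icc θ (θ + Δθ)) t := by
    intro t _
    have h1' : HasDerivAt (fun t : ℝ => Real.cos t + Real.cos (pibar * t))
        (-Real.sin t + -Real.sin (pibar * t) * pibar) t := by
      exact (Real.hasDerivAt_cos t).add
        (((Real.hasDerivAt_cos (pibar * t)).comp t
          ((hasDerivAt_id t).const_mul pibar)).congr_deriv (by ring))
    exact (h1'.congr_deriv (by ring)).hasDerivWithinAt
  have hbound : ∀ t ∈ Set.Icc θ (θ + Δθ),
      ‖-(Real.sin t + pibar * Real.sin (pibar * t))‖ ≤ 1 := by
    intro t ht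
    rw [Real.norm_eq_abs, abs_neg]
    have key : Real.sin t + pibar * Real.sin (pibar * t)
        = (1 - pibar) * Real.sin t + pibar * (Real.sin t + Real.sin (pibar * t)) := by ring
    rw [key]
    calc |(1 - pibar) * Real.sin t + pibar * (Real.sin t + Real.sin (pibar * t))|
        ≤ |(1 - pibar) * Real.sin t| + |pibar * (Real.sin t + Real.sin (pibar * t))| :=
          abs_add_le _ _
      _ = (1 - pibar) * |Real.sin t| + pibar * |Real.sin t + Real.sin (pibar * t)| := by
          rw [abs_mul, abs_mul, abs_of_nonneg (by linarith), abs_of_nonneg h0]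
      _ ≤ (1 - pibar) * 1 + pibar * 1 := by
          gcongr
          · exact Real.abs_sin_le_one t
          · exact hy t ht
      _ = 1 := by ring
  have := (convex_Icc θ (θ + Δθ)).norm_image_sub_le_of_norm_hasDerivWithin_le
    hderiv hbound (Set.left_mem_Icc.mpr (by linarith))
    (Set.right_mem_Icc.mpr (by linarith))
  simpa [Real.norm_eq_abs, abs_of_nonneg hΔ] using this
end

section
/- Let π̄ ∈ ℝ with 0 ≤ π̄ ≤ 1, let θ ∈ ℝ, and let Δθ ≥ 0. Suppose that for all t ∈ [θ, θ + Δθ] one has |cos t + cos(π̄·t)| ≤ 1. Then |(sin(θ + Δθ) + sin(π̄·(θ + Δθ))) − (sin θ + sin(π̄·θ))| ≤ Δθ. -/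
theorem pi_quant_error_imag (pibar : ℝ) (h0 : 0 ≤ pibar) (h1 : pibar ≤ 1)
    (θ Δθ : ℝ) (hΔ : 0 ≤ Δθ)
    (hx : ∀ t ∈ Set.Icc θ (θ + Δθ), |Real.cos t + Real.cos (pibar * t)| ≤ 1) :
    |(Real.sin (θ + Δθ) + Real.sin (pibar * (θ + Δθ))) -
      (Real.sin θ + Real.sin (pibar * θ))| ≤ Δθ := by
  have hder : ∀ t ∈ Set.Icc θ (θ + Δθ),
      HasDerivWithinAt (fun t => Real.sin t + Real.sin (pibar * t))
        (Real.cos t + pibar * Real.cos (pibar * t)) (Set.Icc θ (θ + Δθ)) t := by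
    intro t ht
    exact ((Real.hasDerivAt_sin t).add
      (((Real.hasDerivAt_sin (pibar * t)).comp t
        ((hasDerivAt_id t).const_mul pibar)).congr_deriv (by ring))).hasDerivWithinAt
  have hbound : ∀ t ∈ Set.Icc θ (θ + Δθ),
      ‖Real.cos t + pibar * Real.cos (pibar * t)‖ ≤ 1 := by
    intro t ht
    have h := hx t ht
    have hc := Real.abs_cos_le_one t
    have : Real.cos t + pibar * Real.cos (pibar * t)
        = (1 - pibar) * Real.cos t + pibar * (Real.cos t + Real.cos (pibar * t)) := by ring
    rw [Real.norm_eq_abs, this]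
    calc |(1 - pibar) * Real.cos t + pibar * (Real.cos t + Real.cos (pibar * t))|
        ≤ |(1 - pibar) * Real.cos t| + |pibar * (Real.cos t + Real.cos (pibar * t))| :=
          abs_add_le _ _
      _ ≤ (1 - pibar) * 1 + pibar * 1 := by
          rw [abs_mul, abs_mul, abs_of_nonneg (by linarith), abs_of_nonneg h0]
          gcongr <;> linarith
      _ = 1 := by ring
  have hconv : Convex ℝ (Set.Icc θ (θ + Δθ)) := convex_Icc _ _
  have := hconv.norm_image_sub_le_of_norm_hasDerivWithin_le hder hbound
    (Set.left_mem_Icc.2 (by linarith)) (Set.right_mem_Icc.2 (by linarith))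
  simpa [Real.norm_eq_abs, abs_of_nonneg hΔ] using this
end

section
/- Let λ be a natural number, let π̄ > 0 be a real number, and set M = 2π·10^{λ}. Then (1/M)·∫₀^M |sin θ + π̄·sin(π̄·θ)| dθ ≤ 2(1 + π̄)/π + 2/M. -/
open Real intervalIntegral

lemma abs_sin_periodic : Function.Periodic (fun x => |Real.sin x|) Real.pi := by
  intro x
  simp [Real.sin_add_pi]

lemma abs_sin_intble (a b : ℝ) :
    IntervalIntegrable (fun x => |Real.sin x|) MeasureTheory.volume a b :=
  (Real.continuous_sin.abs).intervalIntegrable a b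

lemma integral_abs_sin_nat (n : ℕ) :
    ∫ x in (0:ℝ)..(n * Real.pi), |Real.sin x| = 2 * n := by
  have h1 : ∫ x in (0:ℝ)..Real.pi, |Real.sin x| = 2 := by
    rw [intervalIntegral.integral_congr (g := Real.sin)]
    · norm_num [integral_sin, Real.cos_pi]
    · intro x hx
      rw [Set.uIcc_of_le Real.pi_pos.le] at hx
      exact abs_of_nonneg (Real.sin_nonneg_of_nonneg_of_le_pi hx.1 hx.2)
  have h := abs_sin_periodic.intervalIntegral_add_zsmul_eq (n : ℤ) 0 abs_sin_intble
  simp only [zero_add, zsmul_eq_mul, Int.cast_natCast, smul_eq_mul] at h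
  rw [h, h1]
  ring

lemma integral_abs_sin_le (T : ℝ) (hT : 0 ≤ T) :
    ∫ x in (0:ℝ)..T, |Real.sin x| ≤ 2 * T / Real.pi + 2 := by
  set n : ℕ := ⌊T / Real.pi⌋₊ + 1 with hn
  have hTn : T ≤ n * Real.pi := by
    rw [hn]
    push_cast
    rw [← div_le_iff₀ Real.pi_pos]
    exact (Nat.lt_floor_add_one _).le
  calc ∫ x in (0:ℝ)..T, |Real.sin x|
      ≤ ∫ x in (0:ℝ)..(n * Real.pi), |Real.sin x| := by
        apply intervalIntegral.integral_mono_interval le_rfl hT hTn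
        · filter_upwards with x using abs_nonneg _
        · exact (abs_sin_intble _ _)
    _ = 2 * n := integral_abs_sin_nat n
    _ ≤ 2 * T / Real.pi + 2 := by
        have : (n : ℝ) ≤ T / Real.pi + 1 := by
          rw [hn]; push_cast
          linarith [Nat.floor_le (a := T / Real.pi) (by positivity)]
        rw [mul_div_assoc]
        linarith

theorem pi_quant_average_error (lam : ℕ) (pibar : ℝ) (hpibar : 0 < pibar)
    (M : ℝ) (hM : M = 2 * Real.pi * 10 ^ lam) :
    (1 / M) * ∫ θ in (0 : ℝ)..M, |Real.sin θ + pibar * Real.sin (pibar * θ)| ≤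
      2 * (1 + pibar) / Real.pi + 2 / M := by
  have hMpos : 0 < M := by rw [hM]; positivity
  have hintble1 : IntervalIntegrable (fun θ => |Real.sin θ|) MeasureTheory.volume 0 M :=
    abs_sin_intble 0 M
  have hintble2 : IntervalIntegrable (fun θ => pibar * |Real.sin (pibar * θ)|)
      MeasureTheory.volume 0 M :=
    (Continuous.intervalIntegrable (by continuity) 0 M)
  -- triangle inequality pointwise
  have step1 : ∫ θ in (0:ℝ)..M, |Real.sin θ + pibar * Real.sin (pibar * θ)|
      ≤ (∫ θ in (0:ℝ)..M, |Real.sin θ|) + ∫ θ in (0:ℝ)..M, pibar * |Real.sin (pibar * θ)| := by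
    rw [← intervalIntegral.integral_add hintble1 hintble2]
    apply intervalIntegral.integral_mono_on hMpos.le
      (Continuous.intervalIntegrable (by continuity) 0 M) (hintble1.add hintble2)
    intro x _
    calc |Real.sin x + pibar * Real.sin (pibar * x)|
        ≤ |Real.sin x| + |pibar * Real.sin (pibar * x)| := abs_add_le _ _
      _ = |Real.sin x| + pibar * |Real.sin (pibar * x)| := by
          rw [abs_mul, abs_of_pos hpibar]
  -- first integral exactly
  have e1 : ∫ θ in (0:ℝ)..M, |Real.sin θ| = 2 * (2 * 10 ^ lam : ℝ) := by
    have : M = ((2 * 10 ^ lam : ℕ) : ℝ) * Real.pi := by rw [hM]; push_cast; ring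
    rw [this, integral_abs_sin_nat]
    push_cast; ring
  -- second integral via substitution
  have e2 : ∫ θ in (0:ℝ)..M, pibar * |Real.sin (pibar * θ)|
      = ∫ u in (0:ℝ)..(pibar * M), |Real.sin u| := by
    rw [intervalIntegral.integral_const_mul]
    have := intervalIntegral.smul_integral_comp_mul_left (fun u => |Real.sin u|) (a := 0) (b := M) pibar
    simpa [smul_eq_mul] using this
  have b2 : ∫ u in (0:ℝ)..(pibar * M), |Real.sin u| ≤ 2 * (pibar * M) / Real.pi + 2 :=
    integral_abs_sin_le _ (by positivity)
  have total : ∫ θ in (0:ℝ)..M, |Real.sin θ + pibar * Real.sin (pibar * θ)|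
      ≤ 2 * (2 * 10 ^ lam : ℝ) + (2 * (pibar * M) / Real.pi + 2) := by
    rw [← e1]
    calc _ ≤ _ := step1
    _ ≤ _ := by rw [e2] at *; linarith
  rw [one_div, inv_mul_le_iff₀ hMpos]
  have hpi := Real.pi_pos
  have hMeq : 2 * (2 * 10 ^ lam : ℝ) = 2 * M / Real.pi := by
    rw [hM]; field_simp
  calc ∫ θ in (0:ℝ)..M, |Real.sin θ + pibar * Real.sin (pibar * θ)|
      ≤ 2 * (2 * 10 ^ lam : ℝ) + (2 * (pibar * M) / Real.pi + 2) := total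
    _ = M * (2 * (1 + pibar) / Real.pi + 2 / M) := by
        rw [hMeq]; field_simp; ring
end
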